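/- The function f is continuously differentiable on [0,∞) with f(0) = 0 and derivative f'(r) = φ(r) g(r); f' is nonincreasing (hence f is concave), and φ(R₀)/2 ≤ f'(r) ≤ 1 for all r ≥ 0, so in particular f is strictly increasing. -/

import Mathlib

open MeasureTheory Real Set
open scoped RealInnerProductSpace

/-- `φ(r) = exp(−(1/4) ∫₀^r s κ₋(s) ds)` where `κ₋ = max(0, −κ)`. -/
noncomputable def phiF (κ : ℝ → ℝ) (r : ℝ) : ℝ :=
  Real.exp (-(1 / 4) * ∫ s in (0:ℝ)..r, s * max 0 (-κ s))

/-- `Φ(r) = ∫₀^r φ(s) ds`. -/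
noncomputable def PhiF (κ : ℝ → ℝ) (r : ℝ) : ℝ := ∫ s in (0:ℝ)..r, phiF κ s

/-- `R₀ = inf {s ≥ 0 : κ(r) ≥ 0 for all r ≥ s}`. -/
noncomputable def R0 (κ : ℝ → ℝ) : ℝ := sInf {s : ℝ | 0 ≤ s ∧ ∀ r, s ≤ r → 0 ≤ κ r}

/-- `R₁ = inf {s ≥ R₀ : s(s − R₀)κ(r) ≥ 8 for all r ≥ s}`. -/
noncomputable def R1 (κ : ℝ → ℝ) : ℝ :=
  sInf {s : ℝ | R0 κ ≤ s ∧ ∀ r, s ≤ r → 8 ≤ s * (s - R0 κ) * κ r}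

/-- `c = (∫₀^{R₁} Φ(s) φ(s)⁻¹ ds)⁻¹`. -/
noncomputable def cF (κ : ℝ → ℝ) : ℝ := (∫ s in (0:ℝ)..R1 κ, PhiF κ s / phiF κ s)⁻¹

/-- `g(r) = 1 − (c/2) ∫₀^{min(r,R₁)} Φ(s) φ(s)⁻¹ ds`. -/
noncomputable def gF (κ : ℝ → ℝ) (r : ℝ) : ℝ :=
  1 - cF κ / 2 * ∫ s in (0:ℝ)..min r (R1 κ), PhiF κ s / phiF κ s

/-- `f(r) = ∫₀^r φ(s) g(s) ds`. -/
noncomputable def fF (κ : ℝ → ℝ) (r : ℝ) : ℝ := ∫ s in (0:ℝ)..r, phiF κ s * gF κ s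

/-- FTC primitive lemma on `Ici 0`. -/
lemma primitive_hasDerivWithinAt {F : ℝ → ℝ} (hF : ContinuousOn F (Set.Ici 0))
    {r : ℝ} (hr : 0 ≤ r) :
    HasDerivWithinAt (fun x => ∫ s in (0:ℝ)..x, F s) (F r) (Set.Ici 0) r := by
  have hint : IntervalIntegrable F volume 0 r :=
    (hF.mono (by rw [Set.uIcc_of_le hr]; exact Set.Icc_subset_Ici_self)).intervalIntegrable
  rcases eq_or_lt_of_le hr with h0 | h0
  · subst h0
    exact intervalIntegral.integral_hasDerivWithinAt_right hint
      ((hF.mono Set.Ioi_subset_Ici_self).stronglyMeasurableAtFilter_nhdsWithin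
        measurableSet_Ioi 0)
      ((hF.continuousWithinAt Set.self_mem_Ici).mono Set.Ioi_subset_Ici_self)
  · have hmem : Set.Ici (0:ℝ) ∈ nhds r := Ici_mem_nhds h0
    have hca : ContinuousAt F r := hF.continuousAt hmem
    exact (intervalIntegral.integral_hasDerivAt_right hint
      (ContinuousAt.stronglyMeasurableAtFilter isOpen_Ioi
        (fun x hx => hF.continuousAt (Ici_mem_nhds hx)) r h0) hca).hasDerivWithinAt

lemma contOn_intervalIntegrable {F : ℝ → ℝ} (hF : ContinuousOn F (Set.Ici 0))
    {a b : ℝ} (ha : 0 ≤ a) (hab : a ≤ b) : IntervalIntegrable F volume a b := by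
  apply ContinuousOn.intervalIntegrable
  apply hF.mono
  rw [Set.uIcc_of_le hab]
  exact fun x hx => le_trans ha hx.1

lemma primitive_continuousOn {F : ℝ → ℝ} (hF : ContinuousOn F (Set.Ici 0)) :
    ContinuousOn (fun x => ∫ s in (0:ℝ)..x, F s) (Set.Ici 0) :=
  fun r hr => (primitive_hasDerivWithinAt hF hr).continuousWithinAt

theorem stmt5 (κ : ℝ → ℝ) (hκcont : ContinuousOn κ (Set.Ici 0))
    (hκliminf : ∃ ε > (0 : ℝ), ∃ R : ℝ, ∀ r ≥ R, ε ≤ κ r) (hR1 : 0 < R1 κ) :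
    fF κ 0 = 0 ∧
    (∀ r : ℝ, 0 ≤ r → HasDerivWithinAt (fF κ) (phiF κ r * gF κ r) (Set.Ici 0) r) ∧
    ContinuousOn (fun r => phiF κ r * gF κ r) (Set.Ici 0) ∧
    AntitoneOn (fun r => phiF κ r * gF κ r) (Set.Ici 0) ∧
    ConcaveOn ℝ (Set.Ici 0) (fF κ) ∧
    (∀ r : ℝ, 0 ≤ r → phiF κ (R0 κ) / 2 ≤ phiF κ r * gF κ r ∧ phiF κ r * gF κ r ≤ 1) ∧
    StrictMonoOn (fF κ) (Set.Ici 0) := by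
  -- the inner integrand s * κ₋(s)
  set km : ℝ → ℝ := fun s => s * max 0 (-κ s) with hkm
  have kmCont : ContinuousOn km (Set.Ici 0) :=
    continuousOn_id.mul ((continuous_const.max continuous_id).comp_continuousOn hκcont.neg)
  have kmNonneg : ∀ s ∈ Set.Ici (0:ℝ), 0 ≤ km s :=
    fun s hs => mul_nonneg hs (le_max_left _ _)
  have kmInt : ∀ {a b : ℝ}, 0 ≤ a → a ≤ b → IntervalIntegrable km volume a b :=
    fun ha hab => contOn_intervalIntegrable kmCont ha hab
  set A : ℝ → ℝ := fun x => ∫ s in (0:ℝ)..x, km s with hA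
  have ACont : ContinuousOn A (Set.Ici 0) := primitive_continuousOn kmCont
  have Amono : ∀ a b : ℝ, 0 ≤ a → a ≤ b → A a ≤ A b := by
    intro a b ha hab
    have h1 : A a + ∫ s in a..b, km s = A b :=
      intervalIntegral.integral_add_adjacent_intervals (kmInt le_rfl ha) (kmInt ha hab)
    have h2 : 0 ≤ ∫ s in a..b, km s :=
      intervalIntegral.integral_nonneg hab (fun s hs => kmNonneg s (le_trans ha hs.1))
    linarith
  have Anonneg : ∀ r : ℝ, 0 ≤ r → 0 ≤ A r := by
    intro r hr
    have : A 0 = 0 := intervalIntegral.integral_same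
    have := Amono 0 r le_rfl hr; linarith
  have phi_def : ∀ r, phiF κ r = Real.exp (-(1/4) * A r) := fun r => rfl
  have phi_pos : ∀ r, 0 < phiF κ r := fun r => Real.exp_pos _
  have phiCont : ContinuousOn (phiF κ) (Set.Ici 0) :=
    Real.continuous_exp.comp_continuousOn (continuousOn_const.mul ACont)
  have phi_le_one : ∀ r : ℝ, 0 ≤ r → phiF κ r ≤ 1 := by
    intro r hr
    rw [phi_def, Real.exp_le_one_iff]
    nlinarith [Anonneg r hr]
  have phiAnti : ∀ a b : ℝ, 0 ≤ a → a ≤ b → phiF κ b ≤ phiF κ a := by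
    intro a b ha hab
    rw [phi_def, phi_def, Real.exp_le_exp]
    nlinarith [Amono a b ha hab]
  -- R0 facts
  set S : Set ℝ := {s : ℝ | 0 ≤ s ∧ ∀ r, s ≤ r → 0 ≤ κ r} with hS
  have hSne : S.Nonempty := by
    obtain ⟨ε, hε, R, hR⟩ := hκliminf
    exact ⟨max R 0, le_max_right _ _,
      fun r hr => le_trans hε.le (hR r (le_trans (le_max_left _ _) hr))⟩
  have hSbdd : BddBelow S := ⟨0, fun s hs => hs.1⟩
  have hR0 : R0 κ = sInf S := rfl
  have R0_nonneg : 0 ≤ R0 κ := le_csInf hSne (fun s hs => hs.1)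
  have kappa_nonneg : ∀ r : ℝ, R0 κ < r → 0 ≤ κ r := by
    intro r hrr
    obtain ⟨s, hsS, hs⟩ := exists_lt_of_csInf_lt hSne (hR0 ▸ hrr)
    exact hsS.2 r hs.le
  have phi_constant : ∀ r : ℝ, R0 κ ≤ r → phiF κ r = phiF κ (R0 κ) := by
    intro r hr
    have hzero : ∫ s in (R0 κ)..r, km s = 0 := by
      rw [intervalIntegral.integral_of_le hr]
      rw [MeasureTheory.setIntegral_congr_fun measurableSet_Ioc
        (g := fun _ => (0:ℝ)) ?_]
      · simp
      · intro s hs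
        have : 0 ≤ κ s := kappa_nonneg s hs.1
        simp only [hkm]
        rw [max_eq_left (by linarith)]
        ring
    have h2 : A (R0 κ) + ∫ s in (R0 κ)..r, km s = A r :=
      intervalIntegral.integral_add_adjacent_intervals (kmInt le_rfl R0_nonneg)
        (kmInt R0_nonneg hr)
    have : A r = A (R0 κ) := by rw [← h2, hzero]; ring
    rw [phi_def, phi_def, this]
  have phi_lower : ∀ r : ℝ, 0 ≤ r → phiF κ (R0 κ) ≤ phiF κ r := by
    intro r hr
    rcases le_total r (R0 κ) with h | h
    · exact phiAnti r (R0 κ) hr h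
    · rw [phi_constant r h]
  -- PhiF facts
  have PhiCont : ContinuousOn (PhiF κ) (Set.Ici 0) := primitive_continuousOn phiCont
  have phiIntOn : ∀ {a b : ℝ}, 0 ≤ a → a ≤ b → IntervalIntegrable (phiF κ) volume a b :=
    fun ha hab => contOn_intervalIntegrable phiCont ha hab
  have Phi_nonneg : ∀ s : ℝ, 0 ≤ s → 0 ≤ PhiF κ s := by
    intro s hs
    exact intervalIntegral.integral_nonneg hs (fun x _ => (phi_pos x).le)
  have Phi_pos : ∀ s : ℝ, 0 < s → 0 < PhiF κ s := by
    intro s hs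
    exact intervalIntegral.intervalIntegral_pos_of_pos_on (phiIntOn le_rfl hs.le)
      (fun x _ => phi_pos x) hs
  -- q = Φ/φ
  set q : ℝ → ℝ := fun s => PhiF κ s / phiF κ s with hq
  have qCont : ContinuousOn q (Set.Ici 0) :=
    PhiCont.div phiCont (fun x _ => (phi_pos x).ne')
  have qNonneg : ∀ s : ℝ, 0 ≤ s → 0 ≤ q s :=
    fun s hs => div_nonneg (Phi_nonneg s hs) (phi_pos s).le
  have qInt : ∀ {a b : ℝ}, 0 ≤ a → a ≤ b → IntervalIntegrable q volume a b :=
    fun ha hab => contOn_intervalIntegrable qCont ha hab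
  set I : ℝ → ℝ := fun x => ∫ s in (0:ℝ)..x, q s with hI
  have ICont : ContinuousOn I (Set.Ici 0) := primitive_continuousOn qCont
  have Imono : ∀ a b : ℝ, 0 ≤ a → a ≤ b → I a ≤ I b := by
    intro a b ha hab
    have h1 : I a + ∫ s in a..b, q s = I b :=
      intervalIntegral.integral_add_adjacent_intervals (qInt le_rfl ha) (qInt ha hab)
    have h2 : 0 ≤ ∫ s in a..b, q s :=
      intervalIntegral.integral_nonneg hab (fun s hs => qNonneg s (le_trans ha hs.1))
    linarith
  have Inonneg : ∀ r : ℝ, 0 ≤ r → 0 ≤ I r := by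
    intro r hr
    have h0 : I 0 = 0 := intervalIntegral.integral_same
    have := Imono 0 r le_rfl hr; linarith
  have IR1_pos : 0 < I (R1 κ) :=
    intervalIntegral.intervalIntegral_pos_of_pos_on (qInt le_rfl hR1.le)
      (fun x hx => div_pos (Phi_pos x hx.1) (phi_pos x)) hR1
  have c_def : cF κ = (I (R1 κ))⁻¹ := rfl
  have c_pos : 0 < cF κ := by rw [c_def]; exact inv_pos.mpr IR1_pos
  have cI : cF κ * I (R1 κ) = 1 := inv_mul_cancel₀ IR1_pos.ne'
  have g_def : ∀ r, gF κ r = 1 - cF κ / 2 * I (min r (R1 κ)) := fun r => rfl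
  have g_le_one : ∀ r : ℝ, 0 ≤ r → gF κ r ≤ 1 := by
    intro r hr
    have hmin : (0:ℝ) ≤ min r (R1 κ) := le_min hr hR1.le
    rw [g_def]
    nlinarith [mul_nonneg c_pos.le (Inonneg _ hmin)]
  have g_ge_half : ∀ r : ℝ, 0 ≤ r → 1/2 ≤ gF κ r := by
    intro r hr
    have hmin : (0:ℝ) ≤ min r (R1 κ) := le_min hr hR1.le
    have h1 : I (min r (R1 κ)) ≤ I (R1 κ) := Imono _ _ hmin (min_le_right _ _)
    rw [g_def]
    nlinarith [mul_le_mul_of_nonneg_left h1 c_pos.le, cI]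
  have gAnti : ∀ a b : ℝ, 0 ≤ a → a ≤ b → gF κ b ≤ gF κ a := by
    intro a b ha hab
    have hmina : (0:ℝ) ≤ min a (R1 κ) := le_min ha hR1.le
    have h1 : I (min a (R1 κ)) ≤ I (min b (R1 κ)) :=
      Imono _ _ hmina (min_le_min hab le_rfl)
    rw [g_def, g_def]
    nlinarith [mul_le_mul_of_nonneg_left h1 c_pos.le]
  have gCont : ContinuousOn (gF κ) (Set.Ici 0) := by
    have hmincont : Continuous (fun r : ℝ => min r (R1 κ)) :=
      continuous_id.min continuous_const
    have : ContinuousOn (fun r : ℝ => I (min r (R1 κ))) (Set.Ici 0) :=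
      ICont.comp hmincont.continuousOn (fun r hr => le_min hr hR1.le)
    exact continuousOn_const.sub (continuousOn_const.mul this)
  -- f' = φ g
  set fd : ℝ → ℝ := fun r => phiF κ r * gF κ r with hfd
  have fdCont : ContinuousOn fd (Set.Ici 0) := phiCont.mul gCont
  have fdDeriv : ∀ r : ℝ, 0 ≤ r → HasDerivWithinAt (fF κ) (fd r) (Set.Ici 0) r :=
    fun r hr => primitive_hasDerivWithinAt fdCont hr
  have fd_lower : ∀ r : ℝ, 0 ≤ r → phiF κ (R0 κ) / 2 ≤ fd r := by
    intro r hr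
    have h1 := phi_lower r hr
    have h2 := g_ge_half r hr
    have key : phiF κ (R0 κ) * (1/2) ≤ phiF κ r * gF κ r :=
      mul_le_mul h1 h2 (by norm_num) (phi_pos r).le
    show phiF κ (R0 κ) / 2 ≤ phiF κ r * gF κ r
    linarith
  have fd_upper : ∀ r : ℝ, 0 ≤ r → fd r ≤ 1 := by
    intro r hr
    have h1 := phi_le_one r hr
    have h2 := g_le_one r hr
    have h3 := g_ge_half r hr
    show phiF κ r * gF κ r ≤ 1
    nlinarith [phi_pos r, mul_le_mul h1 h2 (by linarith) zero_le_one]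
  have fd_pos : ∀ r : ℝ, 0 ≤ r → 0 < fd r := by
    intro r hr
    have h2 := g_ge_half r hr
    exact mul_pos (phi_pos r) (by linarith)
  have fdAnti : AntitoneOn fd (Set.Ici 0) := by
    intro a ha b hb hab
    have h1 := phiAnti a b ha hab
    have h2 := gAnti a b ha hab
    have h3 := g_ge_half b hb
    have h4 := phi_pos a
    show phiF κ b * gF κ b ≤ phiF κ a * gF κ a
    exact mul_le_mul h1 h2 (by linarith) h4.le
  have fCont : ContinuousOn (fF κ) (Set.Ici 0) :=
    fun r hr => (fdDeriv r hr).continuousWithinAt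
  have hint : interior (Set.Ici (0:ℝ)) = Set.Ioi 0 := interior_Ici
  have fDerivAt : ∀ x : ℝ, 0 < x → HasDerivAt (fF κ) (fd x) x := by
    intro x hx
    exact (fdDeriv x hx.le).hasDerivAt (Ici_mem_nhds hx)
  have fderiv_eq : ∀ x : ℝ, 0 < x → deriv (fF κ) x = fd x :=
    fun x hx => (fDerivAt x hx).deriv
  have concave : ConcaveOn ℝ (Set.Ici 0) (fF κ) := by
    apply AntitoneOn.concaveOn_of_deriv (convex_Ici 0) fCont
    · rw [hint]
      exact fun x hx => ((fDerivAt x hx).differentiableAt).differentiableWithinAt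
    · rw [hint]
      intro a ha b hb hab
      rw [fderiv_eq a ha, fderiv_eq b hb]
      exact fdAnti (Set.mem_Ici.mpr (le_of_lt ha)) (Set.mem_Ici.mpr (le_of_lt hb)) hab
  have strictmono : StrictMonoOn (fF κ) (Set.Ici 0) := by
    apply strictMonoOn_of_deriv_pos (convex_Ici 0) fCont
    rw [hint]
    intro x hx
    rw [fderiv_eq x hx]
    exact fd_pos x hx.le
  refine ⟨intervalIntegral.integral_same, fdDeriv, fdCont, fdAnti, concave,
    fun r hr => ⟨fd_lower r hr, fd_upper r hr⟩, strictmono⟩
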